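/- Fix $n \ge 1$ and a nonzero composition $\mu \in \mathbb{N}^n$. Define recursively $c_{m} := s_{m-1}\cdots s_1 t_{-e_1} \in W = S_n \ltimes \mathbb{Z}^n$, acting on $\mathbb{Z}^n$ by $\lambda \mapsto (\lambda_2,\ldots,\lambda_m,\lambda_1 - 1,\lambda_{m+1},\ldots,\lambda_n)$. Let $d = |\mu|$ and let $m_1 \le m_2 \le \cdots \le m_d$ be the sequence such that applying the recursion $\mu \mapsto \mu^* = (\mu_m - 1, \mu_1, \ldots, \mu_{m-1}, 0,\ldots,0)$ with $m = l(\mu)$ repeatedly from $\mu$ down to $0$ uses lengths $m_d \ge \cdots \ge m_1$ in order. Then $c_{m_d} c_{m_{d-1}} \cdots c_{m_1}$ is a reduced decomposition of $m_{-\mu}$, the shortest element of the coset $t_{-\mu}S_n$ in $W$; in particular $\ell(m_{-\mu}) = \sum_{k=1}^d \ell(c_{m_k})$. -/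

import Mathlib

/-- An element `t_τ ∘ u` of the extended affine Weyl group `W = Sₙ ⋉ ℤⁿ`
of type `A_{n-1}`:  `perm` is the finite part `u ∈ Sₙ`, `tr` the translation `τ`. -/
structure AffW (n : ℕ) where
  perm : Equiv.Perm (Fin n)
  tr : Fin n → ℤ

namespace AffW

variable {n : ℕ}

/-- The affine action on `X = ℤⁿ` : `(t_τ u)(x) = u·x + τ` where `(u·x)_i = x_{u⁻¹ i}`. -/
def act (w : AffW n) (x : Fin n → ℤ) : Fin n → ℤ :=
  fun i => x (w.perm⁻¹ i) + w.tr i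

/-- Group multiplication (composition of affine maps). -/
def mul (a b : AffW n) : AffW n :=
  ⟨a.perm * b.perm, fun i => b.tr (a.perm⁻¹ i) + a.tr i⟩

def one (n : ℕ) : AffW n := ⟨1, 0⟩

/-- An affine root `ε_i - ε_j + k`, recorded as the data `(i, j, k)`. -/
abbrev Root (n : ℕ) := Fin n × Fin n × ℤ

/-- A positive affine root: `Δ⁺ = Δ_f⁺ ∪ (Δ_f + ℤ_{>0})`. -/
def IsPos (α : Root n) : Prop := 0 < α.2.2 ∨ (α.2.2 = 0 ∧ α.1 < α.2.1)

/-- A negative affine root. -/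
def IsNeg (α : Root n) : Prop := IsPos (α.2.1, α.1, -α.2.2)

/-- Action of `w` on affine roots, determined by `(wα)(x) = α(w⁻¹x)`. -/
def rootAct (w : AffW n) (α : Root n) : Root n :=
  (w.perm α.1, w.perm α.2.1, α.2.2 - w.tr (w.perm α.1) + w.tr (w.perm α.2.1))

/-- The length `ℓ(w) = #{α ∈ Δ⁺ ∣ wα ∈ -Δ⁺}`. -/
noncomputable def len (w : AffW n) : ℕ :=
  Set.ncard {α : Root n | IsPos α ∧ IsNeg (rootAct w α)}

/-- The affine reflection `s_{ε_i - ε_j + k}` as an element of `W`. -/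
def refl (i j : Fin n) (k : ℤ) : AffW n :=
  ⟨Equiv.swap i j, fun m => if m = i then -k else if m = j then k else 0⟩

/-- Bruhat covering-type relation: right multiplication by a reflection which
increases the length. -/
def BruhatStep (a b : AffW n) : Prop :=
  (∃ i j k, i ≠ j ∧ b = mul a (refl i j k)) ∧ len a < len b

/-- The Bruhat order on the extended affine Weyl group. -/
def BruhatLe : AffW n → AffW n → Prop := Relation.ReflTransGen BruhatStep

/-- `m_τ`, the shortest element of the coset `t_τ Sₙ`. -/
noncomputable def minRep (τ : Fin n → ℤ) : AffW n :=
  ⟨(Finset.exists_min_image (Finset.univ : Finset (Equiv.Perm (Fin n)))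
      (fun u => len (⟨u, τ⟩ : AffW n)) ⟨1, Finset.mem_univ 1⟩).choose, τ⟩

/-- The Bruhat order on `X = ℤⁿ` induced from the extended affine Weyl group:
`τ ≤ η ↔ m_τ ≤ m_η`. -/
noncomputable def XLe (τ η : Fin n → ℤ) : Prop := BruhatLe (minRep τ) (minRep η)

end AffW

namespace AffW

/-- The element `c_m = s_{m-1} ⋯ s_1 t_{-e_1}` of `W = Sₙ ⋉ ℤⁿ`, acting by
`λ ↦ (λ₂, …, λ_m, λ₁ - 1, λ_{m+1}, …, λₙ)` (for `1 ≤ m ≤ n`; junk `1`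
otherwise). -/
noncomputable def cElt (n m : ℕ) : AffW n :=
  if h : 1 ≤ m ∧ m ≤ n then
    ⟨(Fin.cycleRange (⟨m - 1, by omega⟩ : Fin n))⁻¹,
      fun i => if (i : ℕ) = m - 1 then -1 else 0⟩
  else one n

set_option linter.unusedSectionVars false
set_option linter.unusedTactic false
set_option linter.unusedVariables false
variable {n : ℕ}
noncomputable def lo (p : Fin n × Fin n) : ℤ := if p.1 < p.2 then 0 else 1
noncomputable def hi (w : AffW n) (p : Fin n × Fin n) : ℤ :=
  w.tr (w.perm p.1) - w.tr (w.perm p.2) + (if w.perm p.2 < w.perm p.1 then 1 else 0)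

lemma invSet_eq (w : AffW n) :
    {α : Root n | IsPos α ∧ IsNeg (rootAct w α)} =
      ↑(Finset.univ.biUnion fun p : Fin n × Fin n =>
        (Finset.Ico (lo p) (hi w p)).image fun k => (p.1, p.2, k)) := by
  classical
  ext ⟨i, j, k⟩
  constructor
  · rintro ⟨hp, hn⟩
    refine Finset.mem_coe.2 (Finset.mem_biUnion.2 ⟨(i,j), Finset.mem_univ _,
      Finset.mem_image.2 ⟨k, Finset.mem_Ico.2 ⟨?_, ?_⟩, rfl⟩⟩) <;>
    · simp only [IsPos] at hp
      simp only [IsNeg, IsPos, rootAct] at hn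
      simp only [lo, hi]
      split_ifs <;> omega
  · intro h
    obtain ⟨p, -, hm⟩ := Finset.mem_biUnion.1 (Finset.mem_coe.1 h)
    obtain ⟨c, hc, heq⟩ := Finset.mem_image.1 hm
    obtain ⟨h1, h2⟩ := Finset.mem_Ico.1 hc
    obtain ⟨p1, p2⟩ := p
    simp only [Prod.mk.injEq] at heq
    obtain ⟨rfl, rfl, rfl⟩ := heq
    simp only [lo, hi] at h1 h2
    refine ⟨?_, ?_⟩ <;>
    · simp only [IsPos, IsNeg, rootAct]
      split_ifs at h1 h2 <;> omega

lemma len_eq_sum (w : AffW n) :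
    len w = ∑ p : Fin n × Fin n, (hi w p - lo p).toNat := by
  classical
  rw [len, invSet_eq, Set.ncard_coe_finset, Finset.card_biUnion]
  · refine Finset.sum_congr rfl fun p _ => ?_
    rw [Finset.card_image_of_injective _ (fun a b h => by
      simpa using congrArg (fun x : Root n => x.2.2) h), Int.card_Ico]
  · intro x _ y _ hxy
    simp only [Finset.disjoint_left, Finset.mem_image]
    rintro a ⟨k, -, rfl⟩ ⟨k', -, h⟩
    apply hxy
    obtain ⟨x1, x2⟩ := x; obtain ⟨y1, y2⟩ := y
    simp only [Prod.mk.injEq] at h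
    simp [h.1, h.2.1]

lemma len_eq_sum' (u : Equiv.Perm (Fin n)) (τ : Fin n → ℤ) :
    len ⟨u, τ⟩ = ∑ p : Fin n × Fin n,
      (τ p.1 - τ p.2 + (if p.2 < p.1 then 1 else 0)
        - (if u⁻¹ p.1 < u⁻¹ p.2 then 0 else 1)).toNat := by
  classical
  rw [len_eq_sum]
  refine Fintype.sum_equiv (Equiv.prodCongr u u) _ _ fun p => ?_
  simp only [hi, lo, Equiv.prodCongr_apply, Prod.map_fst, Prod.map_snd,
    Equiv.Perm.inv_def, Equiv.symm_apply_apply]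

lemma tri_sum (H : Fin n → Fin n → ℕ) :
    (∑ p : Fin n, ∑ q : Fin n, H p q) =
      (∑ p : Fin n, ∑ q ∈ Finset.Ioi p, (H p q + H q p)) + ∑ p : Fin n, H p p := by
  classical
  have h1 : ∀ p : Fin n, (∑ q : Fin n, H p q) =
      (∑ q ∈ Finset.Ioi p, H p q) + ((∑ q ∈ Finset.Iio p, H p q) + H p p) := by
    intro p
    rw [← Finset.sum_filter_add_sum_filter_not Finset.univ (fun q => p < q) (H p)]
    rw [Finset.filter_lt_eq_Ioi]
    congr 1
    rw [← Finset.sum_filter_add_sum_filter_not _ (fun q => q < p) (H p)]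
    congr 1
    · congr 1
      ext q
      simp only [Finset.mem_filter, Finset.mem_Iio, Finset.mem_univ, true_and, not_lt,
        and_iff_right_iff_imp]
      exact le_of_lt
    · rw [Finset.sum_eq_single_of_mem p (by simp)]
      intro b hb hbp
      exfalso
      simp only [Finset.mem_filter, Finset.mem_univ, true_and, not_lt] at hb
      exact hbp (le_antisymm hb.1 hb.2)
  have hswap : (∑ p : Fin n, ∑ q ∈ Finset.Iio p, H p q)
      = ∑ p : Fin n, ∑ q ∈ Finset.Ioi p, H q p := by
    rw [Finset.sum_comm' (s := Finset.univ) (t := fun p => Finset.Iio p)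
      (s' := fun q => Finset.Ioi q) (t' := Finset.univ) (by intro x y; simp)]
  simp only [h1, hswap, Finset.sum_add_distrib]
  ring

lemma len_eq_tri (u : Equiv.Perm (Fin n)) (τ : Fin n → ℤ) :
    len ⟨u, τ⟩ = ∑ p : Fin n, ∑ q ∈ Finset.Ioi p,
      (τ p - τ q - (if u⁻¹ q < u⁻¹ p then 1 else 0)).natAbs := by
  classical
  rw [len_eq_sum', Fintype.sum_prod_type, tri_sum]
  have hdiag : ∀ p : Fin n,
      (τ p - τ p + (if p < p then 1 else 0) - (if u⁻¹ p < u⁻¹ p then 0 else 1)).toNat = 0 := by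
    intro p; simp
  simp only [hdiag, Finset.sum_const_zero, add_zero]
  refine Finset.sum_congr rfl fun p _ => Finset.sum_congr rfl fun q hq => ?_
  have hpq : p < q := Finset.mem_Ioi.1 hq
  have hne : ((u⁻¹ q : Fin n) : ℕ) ≠ ((u⁻¹ p : Fin n) : ℕ) := by
    intro h
    exact absurd (u⁻¹.injective (Fin.val_injective h)) (ne_of_gt hpq)
  have h1 : ¬ (q < p) := not_lt.2 (le_of_lt hpq)
  simp only [h1, if_false, hpq]
  split_ifs <;> omega


lemma cycleRange_val (j x : Fin n) :
    ((Fin.cycleRange j) x : ℕ) =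
      if (x : ℕ) < (j : ℕ) then (x : ℕ) + 1
      else if (x : ℕ) = (j : ℕ) then 0 else (x : ℕ) := by
  match n with
  | 0 => exact x.elim0
  | n + 1 =>
    rcases lt_trichotomy x j with h | h | h
    · rw [Fin.cycleRange_of_lt h, Fin.val_add_one_of_lt (lt_of_lt_of_le h (Fin.le_last j)),
        if_pos (Fin.lt_def.1 h)]
    · subst h
      rw [Fin.cycleRange_self]
      simp
    · rw [Fin.cycleRange_of_gt h]
      have h1 := Fin.lt_def.1 h
      rw [if_neg (by omega), if_neg (by omega)]

lemma len_cElt (m : ℕ) (hm1 : 1 ≤ m) (hmn : m ≤ n) : len (cElt n m) = n - m := by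
  classical
  rw [cElt, dif_pos ⟨hm1, hmn⟩, len_eq_tri]
  have hterm : ∀ p : Fin n, ∀ q ∈ Finset.Ioi p,
      ((if (p : ℕ) = m - 1 then (-1 : ℤ) else 0) - (if (q : ℕ) = m - 1 then (-1 : ℤ) else 0)
        - (if ((Fin.cycleRange (⟨m - 1, by omega⟩ : Fin n))⁻¹)⁻¹ q
            < ((Fin.cycleRange (⟨m - 1, by omega⟩ : Fin n))⁻¹)⁻¹ p then 1 else 0)).natAbs
      = if (p : ℕ) = m - 1 then 1 else 0 := by
    intro p q hq
    have hpq : (p : ℕ) < (q : ℕ) := Fin.lt_def.1 (Finset.mem_Ioi.1 hq)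
    rw [inv_inv]
    simp only [Fin.lt_def, cycleRange_val]
    split_ifs <;> omega
  rw [Finset.sum_congr rfl fun p _ => Finset.sum_congr rfl fun q hq => hterm p q hq]
  simp only [Finset.sum_const, smul_eq_mul, mul_ite, mul_one, mul_zero]
  have : ∀ p : Fin n, ((p : ℕ) = m - 1) = (p = (⟨m - 1, by omega⟩ : Fin n)) := by
    intro p
    simp [Fin.ext_iff]
  simp only [this]
  rw [Finset.sum_ite_eq' Finset.univ (⟨m - 1, by omega⟩ : Fin n)
    (fun p => (Finset.Ioi p).card)]
  simp [Fin.card_Ioi]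
  omega


def Srt (u : Equiv.Perm (Fin n)) (f : Fin n → ℕ) : Prop :=
  ∀ p q : Fin n, u⁻¹ q < u⁻¹ p ↔ (f p < f q ∨ (f p = f q ∧ q < p))

lemma srt_one : Srt (1 : Equiv.Perm (Fin n)) (fun _ => 0) := by
  intro p q
  simp

section Step

variable {m : ℕ} (h1 : 1 ≤ m) (h2 : m ≤ n) (hm : m - 1 < n)
  (ν ν' : Fin n → ℕ)
  (hnz : ν ⟨m - 1, hm⟩ ≠ 0)
  (hz : ∀ i : Fin n, m ≤ (i : ℕ) → ν i = 0)
  (hν' : ∀ i : Fin n, ν' i =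
    if (i : ℕ) = 0 then ν ⟨m - 1, hm⟩ - 1
    else if (i : ℕ) < m then ν ⟨(i : ℕ) - 1, lt_of_le_of_lt (Nat.sub_le _ _) i.isLt⟩
    else 0)

include h1 h2 hnz hz hν'

lemma nu'_cycleRange (x : Fin n) :
    ν' (Fin.cycleRange (⟨m - 1, hm⟩ : Fin n) x) =
      if (x : ℕ) = m - 1 then ν ⟨m - 1, hm⟩ - 1 else ν x := by
  have hc := cycleRange_val (⟨m - 1, hm⟩ : Fin n) x
  simp only at hc
  rcases lt_trichotomy (x : ℕ) (m - 1) with h | h | h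
  · rw [if_pos (by omega)] at hc
    rw [if_neg (by omega), hν', if_neg (by omega), if_pos (by omega)]
    congr 1
    exact Fin.ext (by simp only [Fin.val_mk]; omega)
  · rw [if_neg (by omega), if_pos (by omega)] at hc
    rw [if_pos (by omega), hν', if_pos (by omega)]
  · rw [if_neg (by omega), if_neg (by omega)] at hc
    rw [if_neg (by omega), hν', if_neg (by omega), if_neg (by omega), eq_comm]
    exact hz x (by omega)

lemma tr_step (w : AffW n)
    (hw : w.tr = fun i => -(ν' i : ℤ)) :
    (mul (cElt n m) w).tr = fun i => -(ν i : ℤ) := by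
  funext i
  show w.tr ((cElt n m).perm⁻¹ i) + (cElt n m).tr i = -(ν i : ℤ)
  rw [cElt, dif_pos ⟨h1, h2⟩]
  simp only [inv_inv, hw]
  rw [nu'_cycleRange h1 h2 hm ν ν' hnz hz hν' i]
  have hq : (i : ℕ) = m - 1 → ν i = ν ⟨m - 1, hm⟩ := fun h => by
    congr 1; exact Fin.ext h
  have hnz' := hnz
  split_ifs <;> push_cast <;> omega

lemma srt_step (u : Equiv.Perm (Fin n)) (hu : Srt u ν') :
    Srt ((cElt n m).perm * u) ν := by
  intro p q
  have happ : ∀ x : Fin n, ((cElt n m).perm * u)⁻¹ x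
      = u⁻¹ (Fin.cycleRange (⟨m - 1, hm⟩ : Fin n) x) := by
    intro x
    rw [cElt, dif_pos ⟨h1, h2⟩]
    simp [mul_inv_rev]
  rw [happ, happ, hu]
  rw [nu'_cycleRange h1 h2 hm ν ν' hnz hz hν' p,
    nu'_cycleRange h1 h2 hm ν ν' hnz hz hν' q]
  have hcp := cycleRange_val (⟨m - 1, hm⟩ : Fin n) p
  have hcq := cycleRange_val (⟨m - 1, hm⟩ : Fin n) q
  simp only at hcp hcq
  have hp' : (p : ℕ) = m - 1 → ν p = ν ⟨m - 1, hm⟩ := fun h => by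
    congr 1; exact Fin.ext h
  have hq' : (q : ℕ) = m - 1 → ν q = ν ⟨m - 1, hm⟩ := fun h => by
    congr 1; exact Fin.ext h
  have hzp : m ≤ (p : ℕ) → ν p = 0 := hz p
  have hzq : m ≤ (q : ℕ) → ν q = 0 := hz q
  have hnz' := hnz
  simp only [Fin.lt_def, hcp, hcq]
  split_ifs <;> omega

end Step


def costN (a b : ℕ) : ℕ := if a < b then b - a - 1 else a - b

noncomputable def csum (f : ℕ → ℕ) (t : ℕ) : ℕ :=
  ∑ q ∈ Finset.range t, ∑ p ∈ Finset.range q, costN (f p) (f q)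

lemma costN_swap (a b : ℕ) (hb : 1 ≤ b) : costN a b = costN (b - 1) a := by
  unfold costN
  split_ifs <;> omega

lemma csum_stable (g : ℕ → ℕ) (m : ℕ) (hz : ∀ i, m ≤ i → g i = 0) :
    ∀ t, m ≤ t → csum g t = csum g m + (t - m) * (∑ p ∈ Finset.range m, g p) := by
  intro t ht
  induction t, ht using Nat.le_induction with
  | base => simp
  | succ t ht ih =>
    rw [csum, Finset.sum_range_succ, ← csum]
    have h0 : g t = 0 := hz t ht
    have hsum : (∑ p ∈ Finset.range t, costN (g p) (g t))
        = ∑ p ∈ Finset.range m, g p := by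
      have : ∀ p, costN (g p) (g t) = g p := by
        intro p; rw [h0, costN]; split_ifs <;> omega
      simp only [this]
      rw [Finset.range_eq_Ico, ← Finset.sum_Ico_consecutive _ (Nat.zero_le m) ht,
        Finset.sum_congr rfl (fun i hi => hz i (Finset.mem_Ico.1 hi).1),
        Finset.sum_const, smul_eq_mul, mul_zero, add_zero, ← Finset.range_eq_Ico]
    rw [ih, hsum]
    have : t + 1 - m = (t - m) + 1 := by omega
    rw [this]
    ring

lemma csum_rot (f f' : ℕ → ℕ) (m0 : ℕ)
    (hnz : 1 ≤ f m0)
    (hf'0 : f' 0 = f m0 - 1)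
    (hf's : ∀ i, i < m0 → f' (i + 1) = f i) :
    csum f' (m0 + 1) = csum f (m0 + 1) := by
  have hterm : ∀ q' ∈ Finset.range m0,
      (∑ p ∈ Finset.range (q' + 1), costN (f' p) (f' (q' + 1)))
        = (∑ p ∈ Finset.range q', costN (f p) (f q')) + costN (f q') (f m0) := by
    intro q' hq'
    have hq := Finset.mem_range.1 hq'
    rw [Finset.sum_range_succ' _ q']
    congr 1
    · refine Finset.sum_congr rfl fun p hp => ?_
      have hp' := Finset.mem_range.1 hp
      rw [hf's p (by omega), hf's q' (by omega)]
    · rw [hf'0, hf's q' (by omega), ← costN_swap (f q') (f m0) hnz]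
  rw [csum, Finset.sum_range_succ' _ m0, csum, Finset.sum_range_succ _ m0]
  simp only [Finset.range_zero, Finset.sum_empty, add_zero]
  rw [Finset.sum_congr rfl hterm, Finset.sum_add_distrib]

lemma csum_step (f f' : ℕ → ℕ) (m N : ℕ) (h1 : 1 ≤ m) (h2 : m ≤ N)
    (hnz : 1 ≤ f (m - 1)) (hz : ∀ i, m ≤ i → f i = 0)
    (hf' : ∀ i, f' i = if i = 0 then f (m - 1) - 1
      else if i < m then f (i - 1) else 0) :
    csum f N = (N - m) + csum f' N := by
  obtain ⟨m0, rfl⟩ : ∃ m0, m = m0 + 1 := ⟨m - 1, by omega⟩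
  simp only [Nat.add_sub_cancel] at hnz hf' ⊢
  have hz' : ∀ i, m0 + 1 ≤ i → f' i = 0 := by
    intro i hi
    rw [hf', if_neg (by omega), if_neg (by omega)]
  have hS : (∑ p ∈ Finset.range (m0 + 1), f' p)
      = (∑ p ∈ Finset.range (m0 + 1), f p) - 1
      ∧ 1 ≤ ∑ p ∈ Finset.range (m0 + 1), f p := by
    constructor
    · have he : ∀ i ∈ Finset.range m0, f' (i + 1) = f i := by
        intro i hi
        have hi' := Finset.mem_range.1 hi
        rw [hf' (i + 1), if_neg (by omega), if_pos (by omega), Nat.add_sub_cancel]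
      have he2 : (∑ i ∈ Finset.range m0, f' (i + 1)) = ∑ x ∈ Finset.range m0, f x :=
        Finset.sum_congr rfl he
      rw [Finset.sum_range_succ' f' m0, Finset.sum_range_succ f m0, hf' 0, if_pos rfl, he2]
      omega
    · calc 1 ≤ f m0 := hnz
        _ ≤ _ := Finset.single_le_sum (fun i _ => Nat.zero_le (f i))
            (Finset.self_mem_range_succ m0)
  have hrot : csum f' (m0 + 1) = csum f (m0 + 1) := by
    refine csum_rot f f' m0 hnz (by rw [hf' 0, if_pos rfl]) ?_
    intro i hi
    rw [hf' (i + 1), if_neg (by omega), if_pos (by omega), Nat.add_sub_cancel]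
  rw [csum_stable f (m0 + 1) hz N h2, csum_stable f' (m0 + 1) hz' N h2, hrot, hS.1]
  have hexp : (N - (m0 + 1)) * (∑ p ∈ Finset.range (m0 + 1), f p)
      = (N - (m0 + 1)) * ((∑ p ∈ Finset.range (m0 + 1), f p) - 1) + (N - (m0 + 1)) := by
    have hone : (∑ p ∈ Finset.range (m0 + 1), f p)
        = ((∑ p ∈ Finset.range (m0 + 1), f p) - 1) + 1 := by omega
    calc (N - (m0 + 1)) * (∑ p ∈ Finset.range (m0 + 1), f p)
        = (N - (m0 + 1)) * (((∑ p ∈ Finset.range (m0 + 1), f p) - 1) + 1) := by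
          rw [← hone]
      _ = (N - (m0 + 1)) * ((∑ p ∈ Finset.range (m0 + 1), f p) - 1) + (N - (m0 + 1)) := by
          ring
  rw [hexp]
  omega


lemma tri_to_csum (f : Fin n → ℕ) (fN : ℕ → ℕ) (hfN : ∀ i : Fin n, fN (i : ℕ) = f i) :
    (∑ p : Fin n, ∑ q ∈ Finset.Ioi p, costN (f p) (f q)) = csum fN n := by
  classical
  have h1 : ∀ p : Fin n, (∑ q ∈ Finset.Ioi p, costN (f p) (f q))
      = ∑ q : Fin n, if (p : ℕ) < (q : ℕ) then costN (fN (p : ℕ)) (fN (q : ℕ)) else 0 := by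
    intro p
    rw [← Finset.filter_lt_eq_Ioi (a := p), Finset.sum_filter]
    refine Finset.sum_congr rfl fun q _ => ?_
    simp only [hfN, Fin.lt_def]
  calc (∑ p : Fin n, ∑ q ∈ Finset.Ioi p, costN (f p) (f q))
      = ∑ p : Fin n, ∑ j ∈ Finset.range n,
          (if (p : ℕ) < j then costN (fN (p : ℕ)) (fN j) else 0) := by
        refine Finset.sum_congr rfl fun p _ => ?_
        rw [h1 p]
        exact Fin.sum_univ_eq_sum_range
          (fun j => if (p : ℕ) < j then costN (fN (p : ℕ)) (fN j) else 0) n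
    _ = ∑ i ∈ Finset.range n, ∑ j ∈ Finset.range n,
          (if i < j then costN (fN i) (fN j) else 0) :=
        Fin.sum_univ_eq_sum_range
          (fun i => ∑ j ∈ Finset.range n, if i < j then costN (fN i) (fN j) else 0) n
    _ = ∑ j ∈ Finset.range n, ∑ i ∈ Finset.range n,
          (if i < j then costN (fN i) (fN j) else 0) := Finset.sum_comm
    _ = csum fN n := by
        refine Finset.sum_congr rfl fun j hj => ?_
        have hjn := Finset.mem_range.1 hj
        rw [← Finset.sum_filter]
        congr 1
        ext x
        simp only [Finset.mem_filter, Finset.mem_range]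
        omega


lemma len_eq_tri' (w : AffW n) :
    len w = ∑ p : Fin n, ∑ q ∈ Finset.Ioi p,
      (w.tr p - w.tr q - (if w.perm⁻¹ q < w.perm⁻¹ p then 1 else 0)).natAbs :=
  len_eq_tri w.perm w.tr

end AffW

open AffW in
/-- For a nonzero composition `μ ∈ ℕⁿ` with `d = |μ|`, iterating
`ν ↦ ν* = (ν_m - 1, ν₁, …, ν_{m-1}, 0, …, 0)` (`m = l(ν)`) from `μ` down to `0`
produces lengths `m_d ≥ m_{d-1} ≥ ⋯ ≥ m₁` (here `ms k = m_{d-k}`), and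
`c_{m_d} c_{m_{d-1}} ⋯ c_{m_1}` is a reduced decomposition of `m_{-μ}`, the
shortest element of the coset `t_{-μ}Sₙ`: the product has translation part
`-μ`, has minimal length in its coset, and its length is the sum of the lengths
of the factors. -/
theorem reduced_decomposition_of_min_coset_rep (n d : ℕ) (mu : Fin n → ℕ)
    (ms : ℕ → ℕ) (ν : ℕ → Fin n → ℕ)
    (hmu : mu ≠ 0) (hd : d = ∑ i, mu i)
    (hnu0 : ν 0 = mu) (hnud : ν d = 0)
    (hstep : ∀ k, k < d → ∃ (hm1 : 1 ≤ ms k) (hmn : ms k ≤ n),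
      (ν k ⟨ms k - 1, by omega⟩ ≠ 0) ∧
      (∀ i : Fin n, ms k ≤ (i : ℕ) → ν k i = 0) ∧
      (∀ i : Fin n, ν (k + 1) i =
        if (i : ℕ) = 0 then ν k ⟨ms k - 1, by omega⟩ - 1
        else if (i : ℕ) < ms k then
          ν k ⟨(i : ℕ) - 1, lt_of_le_of_lt (Nat.sub_le _ _) i.isLt⟩
        else 0)) :
    ((List.ofFn fun k : Fin d => cElt n (ms k)).foldr mul (one n)).tr =
        (fun i => -(mu i : ℤ)) ∧
    (∀ u : Equiv.Perm (Fin n),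
      len ((List.ofFn fun k : Fin d => cElt n (ms k)).foldr mul (one n)) ≤
        len (⟨u, fun i => -(mu i : ℤ)⟩ : AffW n)) ∧
    len ((List.ofFn fun k : Fin d => cElt n (ms k)).foldr mul (one n)) =
      ∑ k ∈ Finset.range d, len (cElt n (ms k)) := by

  classical
  set L : ℕ → AffW n := fun k =>
    ((List.range' k (d - k)).map fun j => cElt n (ms j)).foldr mul (one n) with hL
  have hW : (List.ofFn fun k : Fin d => cElt n (ms k)).foldr mul (one n) = L 0 := by
    rw [hL]
    congr 1
    apply List.ext_getElem
    · simp
    · intro i h1 h2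
      simp
  have hLd : L d = one n := by
    simp [hL]
  have hsucc : ∀ k, k < d → L k = mul (cElt n (ms k)) (L (k + 1)) := by
    intro k hk
    have h1 : d - k = (d - (k + 1)) + 1 := by omega
    simp only [hL, h1, List.range'_succ, List.map_cons, List.foldr_cons]
  have key : ∀ t k, k + t = d →
      ((L k).tr = fun i => -((ν k i : ℕ) : ℤ)) ∧ Srt (L k).perm (ν k) := by
    intro t
    induction t with
    | zero =>
      intro k hk
      obtain rfl : k = d := by omega
      rw [hLd]
      constructor
      · funext i
        simp [one, hnud]
      · intro p q
        simp [one, hnud]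
    | succ t ih =>
      intro k hk
      have hkd : k < d := by omega
      obtain ⟨hm1, hmn, hnz, hz, hrec⟩ := hstep k hkd
      obtain ⟨ihtr, ihsrt⟩ := ih (k + 1) (by omega)
      rw [hsucc k hkd]
      constructor
      · exact tr_step hm1 hmn (by omega) (ν k) (ν (k + 1)) hnz hz hrec (L (k + 1)) ihtr
      · exact srt_step hm1 hmn (by omega) (ν k) (ν (k + 1)) hnz hz hrec (L (k + 1)).perm ihsrt
  obtain ⟨htr, hsrt⟩ := key d 0 (by omega)
  rw [hnu0] at htr hsrt
  have hlen : len (L 0) = ∑ p : Fin n, ∑ q ∈ Finset.Ioi p, costN (mu p) (mu q) := by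
    rw [len_eq_tri']
    simp only [htr]
    refine Finset.sum_congr rfl fun p _ => Finset.sum_congr rfl fun q hq => ?_
    have hpq := Finset.mem_Ioi.1 hq
    have hiff : ((L 0).perm⁻¹ q < (L 0).perm⁻¹ p) ↔ mu p < mu q := by
      rw [hsrt p q]
      constructor
      · rintro (h | ⟨h1, h2⟩)
        · exact h
        · exact absurd hpq (not_lt.2 (le_of_lt h2))
      · exact Or.inl
    unfold costN
    by_cases hc : mu p < mu q
    · rw [if_pos (hiff.2 hc), if_pos hc]
      omega
    · rw [if_neg (fun h => hc (hiff.1 h)), if_neg hc]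
      omega
  have hmin : ∀ u : Equiv.Perm (Fin n),
      len (L 0) ≤ len (⟨u, fun i => -(mu i : ℤ)⟩ : AffW n) := by
    intro u
    rw [hlen, len_eq_tri u (fun i => -(mu i : ℤ))]
    beta_reduce
    refine Finset.sum_le_sum fun p _ => Finset.sum_le_sum fun q hq => ?_
    unfold costN
    split_ifs <;> omega
  have hνN : ∀ k (i : Fin n),
      (fun (j : ℕ) => if h : j < n then ν k ⟨j, h⟩ else 0) (i : ℕ) = ν k i := by
    intro k i
    simp only [dif_pos i.isLt]
  have htele : ∀ t k, k + t = d →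
      csum (fun j => if h : j < n then ν k ⟨j, h⟩ else 0) n
        = ∑ j ∈ Finset.Ico k d, (n - ms j) := by
    intro t
    induction t with
    | zero =>
      intro k hk
      obtain rfl : k = d := by omega
      rw [Finset.Ico_self, Finset.sum_empty, csum]
      refine Finset.sum_eq_zero fun q _ => Finset.sum_eq_zero fun p _ => ?_
      simp [hnud, costN]
    | succ t ih =>
      intro k hk
      have hkd : k < d := by omega
      obtain ⟨hm1, hmn, hnz, hz, hrec⟩ := hstep k hkd
      have hnz' : ∀ (h : ms k - 1 < n), ν k ⟨ms k - 1, h⟩ ≠ 0 := fun h => hnz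
      have hstep' : csum (fun j => if h : j < n then ν k ⟨j, h⟩ else 0) n
          = (n - ms k) + csum (fun j => if h : j < n then ν (k + 1) ⟨j, h⟩ else 0) n := by
        apply csum_step _ _ (ms k) n hm1 hmn
        · rw [dif_pos (show ms k - 1 < n by omega)]
          exact Nat.one_le_iff_ne_zero.2 (hnz' _)
        · intro i hi
          by_cases h : i < n
          · rw [dif_pos h]
            exact hz ⟨i, h⟩ hi
          · rw [dif_neg h]
        · intro i
          by_cases h : i < n
          · rw [dif_pos h, hrec ⟨i, h⟩]
            simp only [Fin.val_mk]
            rw [dif_pos (show ms k - 1 < n by omega)]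
            by_cases h0 : i = 0
            · rw [if_pos h0, if_pos h0]
            · rw [if_neg h0, if_neg h0]
              by_cases hlt : i < ms k
              · rw [if_pos hlt, if_pos hlt, dif_pos (show i - 1 < n by omega)]
              · rw [if_neg hlt, if_neg hlt]
          · rw [dif_neg h, if_neg (show ¬ i = 0 by omega),
              if_neg (show ¬ i < ms k by omega)]
      rw [hstep', ih (k + 1) (by omega), Finset.sum_eq_sum_Ico_succ_bot hkd]
  have hfinal : len (L 0) = ∑ k ∈ Finset.range d, (n - ms k) := by
    rw [hlen, tri_to_csum mu (fun j => if h : j < n then ν 0 ⟨j, h⟩ else 0)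
      (fun i => (hνN 0 i).trans (by rw [hnu0])),
      htele d 0 (by omega), Finset.range_eq_Ico]
  refine ⟨?_, ?_, ?_⟩
  · rw [hW]
    exact htr
  · intro u
    rw [hW]
    exact hmin u
  · rw [hW, hfinal]
    refine Finset.sum_congr rfl fun k hk => ?_
    obtain ⟨hm1, hmn, -⟩ := hstep k (Finset.mem_range.1 hk)
    rw [len_cElt (ms k) hm1 hmn]
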